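/- Let δ ∈ (0,1), let h ≥ 3 be an integer, set k = ⌊h/3⌋, and let X > 1 be real. If n is an integer with X < n ≤ 2X such that Ω_δ(n³+2) ≥ h, then there exist primes p₁ ≤ p₂ ≤ … ≤ p_k with X^δ ≤ p₁, such that the product d = p₁p₂⋯p_k divides n³+2, the inequality p₁p₂⋯p_{k−1}·p_k^(h−k+1) ≤ 9X³ holds, and d ≤ 9^(1/3)·X. -/

import Mathlib

open scoped Classical

/-- `Ω_δ(m)` (relative to `X`): the number of prime factors `p` of `m`, counted with
multiplicity, with `p ≥ X^δ`. -/
noncomputable def OmegaDelta (X δ : ℝ) (m : ℕ) : ℕ :=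
  Multiset.card
    (Multiset.filter (fun p => X ^ δ ≤ (p : ℝ)) (m.primeFactorsList : Multiset ℕ))

private lemma omegaDelta_eq (X δ : ℝ) (m : ℕ) :
    OmegaDelta X δ m = Multiset.card (Multiset.filter (fun p : ℕ => X ^ δ ≤ (p : ℝ))
      (m.primeFactorsList : Multiset ℕ)) := by
  unfold OmegaDelta
  simp [Multiset.filter_map, Function.comp, List.filter_map]
  rfl

private lemma prod_Icc_getD (l : List ℕ) :
    ∀ m, m ≤ l.length → ∏ i ∈ Finset.Icc 1 m, l.getD (i - 1) 0 = (l.take m).prod := by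
  intro m
  induction m with
  | zero => simp
  | succ m ih =>
    intro hm
    rw [Finset.prod_Icc_succ_top (by omega), ih (by omega),
      List.prod_take_succ _ m (by omega)]
    congr 1
    simp [List.getD_eq_getElem, Nat.lt_of_succ_le hm]

private lemma prod_Icc_triple (p : ℕ → ℕ) :
    ∀ k, ∏ j ∈ Finset.Icc 1 (3 * k), p j
      = ∏ i ∈ Finset.Icc 1 k, (p (3 * i - 2) * p (3 * i - 1) * p (3 * i)) := by
  intro k
  induction k with
  | zero => simp
  | succ k ih =>
    rw [show 3 * (k + 1) = (3 * k + 1 + 1) + 1 by ring,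
      Finset.prod_Icc_succ_top (by omega), Finset.prod_Icc_succ_top (by omega),
      Finset.prod_Icc_succ_top (by omega), ih, Finset.prod_Icc_succ_top (by omega)]
    have e1 : 3 * (k + 1) - 2 = 3 * k + 1 := by omega
    have e2 : 3 * (k + 1) - 1 = 3 * k + 1 + 1 := by omega
    have e3 : 3 * (k + 1) = 3 * k + 1 + 1 + 1 := by omega
    rw [e1, e2, e3]
    ring

/-- Let `δ ∈ (0,1)`, `h ≥ 3`, `k = ⌊h/3⌋`, and `X > 1`.  If
`X < n ≤ 2X` and `Ω_δ(n³+2) ≥ h`, then there are primes `X^δ ≤ p₁ ≤ ⋯ ≤ p_k` whose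
product `d = p₁⋯p_k` divides `n³+2`, with `p₁⋯p_{k−1}·p_k^(h−k+1) ≤ 9X³` and
`d ≤ 9^(1/3)·X`. -/
theorem exists_small_prime_product (δ : ℝ) (hδ0 : 0 < δ) (hδ1 : δ < 1)
    (h : ℕ) (hh : 3 ≤ h) (k : ℕ) (hk : k = h / 3)
    (X : ℝ) (hX : 1 < X) (n : ℕ) (hn1 : X < (n : ℝ)) (hn2 : (n : ℝ) ≤ 2 * X)
    (hΩ : h ≤ OmegaDelta X δ (n ^ 3 + 2)) :
    ∃ p : ℕ → ℕ,
      (∀ i, 1 ≤ i → i ≤ k → (p i).Prime) ∧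
      (∀ i j, 1 ≤ i → i ≤ j → j ≤ k → p i ≤ p j) ∧
      X ^ δ ≤ (p 1 : ℝ) ∧
      (∏ i ∈ Finset.Icc 1 k, p i) ∣ n ^ 3 + 2 ∧
      (∏ i ∈ Finset.Icc 1 (k - 1), (p i : ℝ)) * (p k : ℝ) ^ (h - k + 1) ≤ 9 * X ^ 3 ∧
      ((∏ i ∈ Finset.Icc 1 k, p i : ℕ) : ℝ) ≤ 9 ^ ((1 : ℝ) / 3) * X := by
  -- basic index facts
  have hk1 : 1 ≤ k := by omega
  have h3k : 3 * k ≤ h := by rw [hk]; omega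
  have hkh : k ≤ h := by omega
  set N : ℕ := n ^ 3 + 2 with hN
  have hN0 : N ≠ 0 := by omega
  rw [omegaDelta_eq] at hΩ
  -- n ≥ 3
  have hn3 : 3 ≤ n := by
    by_contra hc
    push_neg at hc
    have hn2' : 2 ≤ n := by
      by_contra hc2
      push_neg at hc2
      interval_cases n <;> simp_all <;> linarith
    have hn : n = 2 := by omega
    have : Multiset.card (Multiset.filter (fun p : ℕ => X ^ δ ≤ (p : ℝ))
        (N.primeFactorsList : Multiset ℕ)) ≤ 2 := by
      have : (N.primeFactorsList : Multiset ℕ) = ([2, 5] : List ℕ) := by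
        rw [hN, hn]
        congr 1
        norm_num [Nat.primeFactorsList]
      rw [this]
      have hle := Multiset.card_le_card
        (Multiset.filter_le (fun p : ℕ => X ^ δ ≤ (p : ℝ)) (([2, 5] : List ℕ) : Multiset ℕ))
      simpa using hle
    omega
  -- the sorted list of large prime factors
  set M : Multiset ℕ :=
    Multiset.filter (fun p => X ^ δ ≤ (p : ℝ)) (N.primeFactorsList : Multiset ℕ) with hM
  set l : List ℕ := M.sort (· ≤ ·) with hl
  have hlen : h ≤ l.length := by
    rw [hl, Multiset.length_sort]
    exact hΩ
  have hsorted : l.Pairwise (· ≤ ·) := Multiset.pairwise_sort _ _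
  have hcoe : (l : Multiset ℕ) = M := Multiset.sort_eq _ _
  set p : ℕ → ℕ := fun i => l.getD (i - 1) 0 with hp
  -- membership facts
  have hmem : ∀ i, 1 ≤ i → i ≤ h → p i ∈ M := by
    intro i h1 h2
    have hlt : i - 1 < l.length := by omega
    have : p i ∈ l := by
      rw [hp]
      simp only [List.getD_eq_getElem _ _ hlt]
      exact List.getElem_mem hlt
    rwa [← Multiset.mem_coe, hcoe] at this
  have hprime : ∀ i, 1 ≤ i → i ≤ h → (p i).Prime := by
    intro i h1 h2
    have := hmem i h1 h2
    rw [hM, Multiset.mem_filter, Multiset.mem_coe] at this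
    exact Nat.prime_of_mem_primeFactorsList this.1
  have hge : ∀ i, 1 ≤ i → i ≤ h → X ^ δ ≤ (p i : ℝ) := by
    intro i h1 h2
    have := hmem i h1 h2
    rw [hM, Multiset.mem_filter] at this
    exact this.2
  have hpos : ∀ i, 1 ≤ i → i ≤ h → 1 ≤ p i := fun i h1 h2 => (hprime i h1 h2).one_lt.le
  -- monotonicity
  have hmono : ∀ i j, 1 ≤ i → i ≤ j → j ≤ h → p i ≤ p j := by
    intro i j h1 hij hj
    have hlt : j - 1 < l.length := by omega
    have hlt' : i - 1 < l.length := by omega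
    rw [hp]
    simp only [List.getD_eq_getElem _ _ hlt, List.getD_eq_getElem _ _ hlt']
    exact hsorted.rel_get_of_le (by simpa using Nat.sub_le_sub_right hij 1)
  -- products as products of takes, and divisibility
  have hdvd : ∀ m, m ≤ h → (∏ i ∈ Finset.Icc 1 m, p i) ∣ N := by
    intro m hm
    rw [hp, prod_Icc_getD l m (by omega)]
    have h1 : ((l.take m : List ℕ) : Multiset ℕ) ≤ (l : Multiset ℕ) :=
      Multiset.coe_le.mpr (List.take_sublist m l).subperm
    have h2 : (l : Multiset ℕ) ≤ (N.primeFactorsList : Multiset ℕ) := by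
      rw [hcoe, hM]; exact Multiset.filter_le _ _
    have := Multiset.prod_dvd_prod_of_le (h1.trans h2)
    simpa [Nat.prod_primeFactorsList hN0] using this
  -- the big product Q
  set Q : ℕ := ∏ i ∈ Finset.Icc 1 h, p i with hQ
  have hQN : Q ≤ N := Nat.le_of_dvd (by omega) (hdvd h le_rfl)
  -- N ≤ 9 X^3 over ℝ
  have hNX : (N : ℝ) ≤ 9 * X ^ 3 := by
    have h3 : (3 : ℝ) ≤ (n : ℝ) := by exact_mod_cast hn3
    have hX2 : (n : ℝ) / 2 ≤ X := by linarith
    have hp1 : ((n : ℝ) / 2) ^ 3 ≤ X ^ 3 := by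
      apply pow_le_pow_left₀ (by positivity) hX2
    have hp2 : (3 : ℝ) ^ 3 ≤ (n : ℝ) ^ 3 := by
      apply pow_le_pow_left₀ (by norm_num) h3
    have : (N : ℝ) = (n : ℝ) ^ 3 + 2 := by rw [hN]; push_cast; ring
    rw [this]
    nlinarith [hp1, hp2]
  -- key inequality 1 : p1...p_{k-1} * p_k^(h-k+1) ≤ Q
  have hB : (∏ i ∈ Finset.Icc 1 (k - 1), p i) * p k ^ (h - k + 1) ≤ Q := by
    have hsplit : Q = (∏ i ∈ Finset.Icc 1 (k - 1), p i) * ∏ i ∈ Finset.Ioc (k - 1) h, p i := by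
      rw [hQ, show Finset.Icc 1 (k-1) = Finset.Ioc 0 (k-1) from Finset.Icc_add_one_left_eq_Ioc 0 (k-1),
        Finset.prod_Ioc_consecutive _ (Nat.zero_le _) (by omega),
        ← Finset.Icc_add_one_left_eq_Ioc 0 h, zero_add]
    rw [hsplit]
    apply Nat.mul_le_mul_left
    have hcard : h - k + 1 = (Finset.Ioc (k - 1) h).card := by rw [Nat.card_Ioc]; omega
    rw [hcard]
    apply Finset.pow_card_le_prod
    intro i hi
    rw [Finset.mem_Ioc] at hi
    exact hmono k i hk1 (by omega) hi.2
  -- key inequality 2 : (p1...p_k)^3 ≤ Q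
  have hA : (∏ i ∈ Finset.Icc 1 k, p i) ^ 3 ≤ Q := by
    calc (∏ i ∈ Finset.Icc 1 k, p i) ^ 3 = ∏ i ∈ Finset.Icc 1 k, (p i) ^ 3 := by
          rw [Finset.prod_pow]
      _ ≤ ∏ i ∈ Finset.Icc 1 k, (p (3*i-2) * p (3*i-1) * p (3*i)) := by
          apply Finset.prod_le_prod'
          intro i hi
          rw [Finset.mem_Icc] at hi
          have h1 : p i ≤ p (3*i-2) := hmono i (3*i-2) hi.1 (by omega) (by omega)
          have h2 : p i ≤ p (3*i-1) := hmono i (3*i-1) hi.1 (by omega) (by omega)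
          have h3 : p i ≤ p (3*i) := hmono i (3*i) hi.1 (by omega) (by omega)
          calc (p i) ^ 3 = p i * p i * p i := by ring
            _ ≤ p (3*i-2) * p (3*i-1) * p (3*i) :=
              Nat.mul_le_mul (Nat.mul_le_mul h1 h2) h3
      _ = ∏ j ∈ Finset.Icc 1 (3 * k), p j := (prod_Icc_triple p k).symm
      _ ≤ Q := by
          apply Finset.prod_le_prod_of_subset_of_one_le'
          · apply Finset.Icc_subset_Icc_right h3k
          · intro i hi _
            rw [Finset.mem_Icc] at hi
            exact hpos i hi.1 hi.2
  refine ⟨p, fun i h1 h2 => hprime i h1 (by omega),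
    fun i j h1 hij hj => hmono i j h1 hij (by omega),
    hge 1 le_rfl (by omega), hdvd k hkh, ?_, ?_⟩
  · -- clause 5
    refine le_trans ?_ hNX
    exact_mod_cast (hB.trans hQN)
  · -- clause 6
    have h6 : ((∏ i ∈ Finset.Icc 1 k, p i : ℕ) : ℝ) ^ 3 ≤ 9 * X ^ 3 := by
      have : ((∏ i ∈ Finset.Icc 1 k, p i : ℕ) : ℝ) ^ 3 ≤ (N : ℝ) := by
        exact_mod_cast (hA.trans hQN)
      linarith [hNX]
    have hrhs : (0 : ℝ) ≤ 9 ^ ((1 : ℝ) / 3) * X := by positivity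
    apply le_of_pow_le_pow_left₀ (n := 3) (by norm_num) hrhs
    have : ((9 : ℝ) ^ ((1 : ℝ) / 3) * X) ^ 3 = 9 * X ^ 3 := by
      rw [mul_pow, ← Real.rpow_natCast ((9 : ℝ) ^ ((1 : ℝ) / 3)) 3,
        ← Real.rpow_mul (by norm_num : (0:ℝ) ≤ 9)]
      norm_num
    rw [this]
    exact h6
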